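/- Each generator S_j := I + (2/(n-1))·e_j·𝟙^T - (2n/(n-1))·e_j·e_j^T of the n-dimensional Apollonian group satisfies S_j^T Q_{D,n} S_j = Q_{D,n}, i.e., S_j ∈ Aut(Q_{D,n}). -/

import Mathlib

open Matrix

/-- Descartes quadratic form matrix in dimension `n`. -/
noncomputable def QD (n : ℕ) : Matrix (Fin (n+2)) (Fin (n+2)) ℝ :=
  1 - (n : ℝ)⁻¹ • Matrix.of (fun _ _ => (1 : ℝ))

/-- Wilker quadratic form matrix in dimension `n`. -/
def QW (n : ℕ) : Matrix (Fin (n+2)) (Fin (n+2)) ℝ :=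
  Matrix.of (fun i j =>
    if (i = 0 ∧ j = 1) ∨ (i = 1 ∧ j = 0) then (-4 : ℝ)
    else if i = j then (if 2 ≤ (i : ℕ) then 2 else 0) else 0)

/-- Apollonian group generator `S j` in dimension `n`. -/
noncomputable def S (n : ℕ) (j : Fin (n+2)) : Matrix (Fin (n+2)) (Fin (n+2)) ℝ :=
  Matrix.of (fun i k =>
    if i = j then (if k = j then -1 else 2 / ((n : ℝ) - 1))
    else if i = k then 1 else 0)

/-- Dual Apollonian group generator `S j ^⊥` in dimension `n`. -/
def Sperp (n : ℕ) (j : Fin (n+2)) : Matrix (Fin (n+2)) (Fin (n+2)) ℝ :=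
  Matrix.of (fun i k =>
    if k = j then (if i = j then -1 else 2)
    else if i = k then 1 else 0)

lemma vmv_mul_vmv {m : Type*} [Fintype m] (a b c d : m → ℝ) :
    vecMulVec a b * vecMulVec c d = (b ⬝ᵥ c) • vecMulVec a d := by
  ext i k
  simp only [Matrix.mul_apply, vecMulVec_apply, Matrix.smul_apply, dotProduct,
    smul_eq_mul, Finset.sum_mul]
  exact Finset.sum_congr rfl fun x _ => by ring

lemma vmv_transpose {m : Type*} (a b : m → ℝ) :
    (vecMulVec a b)ᵀ = vecMulVec b a := by
  ext i k
  simp [vecMulVec_apply, mul_comm]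

theorem S_mem_aut_QD (n : ℕ) (hn : 2 ≤ n) (j : Fin (n+2)) :
    (S n j)ᵀ * QD n * S n j = QD n := by
  have hn0 : (n : ℝ) ≠ 0 := by positivity
  have hn1 : (n : ℝ) - 1 ≠ 0 := by
    have : (2 : ℝ) ≤ (n : ℝ) := by exact_mod_cast hn
    linarith
  set c : ℝ := 2 / ((n : ℝ) - 1) with hc
  set v : Fin (n+2) → ℝ := fun i => if i = j then 1 else 0 with hv
  set w : Fin (n+2) → ℝ := fun _ => 1 with hw
  have hvv : v ⬝ᵥ v = 1 := by simp [dotProduct, hv]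
  have hvw : v ⬝ᵥ w = 1 := by simp [dotProduct, hv, hw]
  have hwv : w ⬝ᵥ v = 1 := by simp [dotProduct, hv, hw]
  have hww : w ⬝ᵥ w = (n : ℝ) + 2 := by
    simp [dotProduct, hw, Finset.card_fin]
  have hQD : QD n = 1 - (n : ℝ)⁻¹ • vecMulVec w w := by
    unfold QD
    congr 1
    ext i k
    simp [vecMulVec_apply, hw]
  have hS : S n j = 1 + c • vecMulVec v w - (c * (n : ℝ)) • vecMulVec v v := by
    ext i k
    by_cases hij : i = j
    · by_cases hkj : k = j
      · subst hij; subst hkj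
        simp [S, vecMulVec_apply, hv, hw, Matrix.one_apply, hc]
        field_simp
        ring
      · subst hij
        have : i ≠ k := fun h => hkj h.symm
        simp [S, vecMulVec_apply, hv, hw, Matrix.one_apply, hkj, this, hc]
    · by_cases hik : i = k
      · subst hik
        simp [S, vecMulVec_apply, hv, hw, Matrix.one_apply, hij]
      · simp [S, vecMulVec_apply, hv, hw, Matrix.one_apply, hij, hik]
  have hST : (S n j)ᵀ = 1 + c • vecMulVec w v - (c * (n : ℝ)) • vecMulVec v v := by
    rw [hS]
    simp [transpose_add, transpose_sub, transpose_smul, vmv_transpose]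
  rw [hST, hQD, hS]
  simp only [mul_add, add_mul, mul_sub, sub_mul, mul_one, one_mul,
    smul_mul_assoc, mul_smul_comm, vmv_mul_vmv, hvv, hvw, hwv, hww,
    smul_smul, one_smul]
  have hn1' : (-1 : ℝ) + (n : ℝ) ≠ 0 := by intro h; apply hn1; linarith
  clear_value c v w
  clear hvv hvw hwv hww hQD hS hST hv hw
  match_scalars <;> subst hc <;> field_simp <;> ring
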